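/- Let A ∈ K^{m×N} have unit l_2-norm columns a_1, ..., a_N with coherence μ(A) = max_{j≠ℓ} |⟨a_j, a_ℓ⟩|. Then the restricted isometry constant satisfies δ_s(A) ≤ (s−1) μ(A); in particular if μ(A) ≤ c/√m and m ≥ C s² with c = √C δ_*, then (1−δ_*)||x||_2^2 ≤ ||Ax||_2^2 ≤ (1+δ_*)||x||_2^2 for all s-sparse x ∈ K^N. -/
import Mathlib


/-- Coherence bound on the restricted isometry constant: for a matrix with unit
`ℓ₂`-norm columns and coherence at most `μ`, one has `δ_s(A) ≤ (s-1)μ`; in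
particular if `μ ≤ c/√m` with `c = √C δ⋆` and `m ≥ C s²`, then
`(1-δ⋆)‖x‖₂² ≤ ‖Ax‖₂² ≤ (1+δ⋆)‖x‖₂²` for all `s`-sparse `x`. -/
theorem stmt18 (𝕜 : Type) [RCLike 𝕜] (m N s : ℕ)
    (A : Matrix (Fin m) (Fin N) 𝕜)
    (hcol : ∀ k, ∑ j, ‖A j k‖ ^ 2 = 1)
    (μ : ℝ) (hμ0 : 0 ≤ μ)
    (hμ : ∀ k l : Fin N, k ≠ l → ‖∑ j, (starRingEnd 𝕜) (A j k) * A j l‖ ≤ μ) :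
    (∀ x : Fin N → 𝕜, {k | x k ≠ 0}.ncard ≤ s →
      (1 - ((s : ℝ) - 1) * μ) * ∑ k, ‖x k‖ ^ 2 ≤ ∑ j, ‖A.mulVec x j‖ ^ 2 ∧
      ∑ j, ‖A.mulVec x j‖ ^ 2 ≤ (1 + ((s : ℝ) - 1) * μ) * ∑ k, ‖x k‖ ^ 2) ∧
    (∀ C c δstar : ℝ, 0 < C → 0 < δstar → c = Real.sqrt C * δstar →
      μ ≤ c / Real.sqrt m → (m : ℝ) ≥ C * s ^ 2 →
      ∀ x : Fin N → 𝕜, {k | x k ≠ 0}.ncard ≤ s →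
        (1 - δstar) * ∑ k, ‖x k‖ ^ 2 ≤ ∑ j, ‖A.mulVec x j‖ ^ 2 ∧
        ∑ j, ‖A.mulVec x j‖ ^ 2 ≤ (1 + δstar) * ∑ k, ‖x k‖ ^ 2) := by
  classical
  have Qnn : ∀ x : Fin N → 𝕜, (0:ℝ) ≤ ∑ k, ‖x k‖ ^ 2 := fun x =>
    Finset.sum_nonneg fun k _ => by positivity
  have main : ∀ x : Fin N → 𝕜, {k | x k ≠ 0}.ncard ≤ s →
      |∑ j, ‖A.mulVec x j‖ ^ 2 - ∑ k, ‖x k‖ ^ 2| ≤ ((s:ℝ) - 1) * μ * ∑ k, ‖x k‖ ^ 2 := by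
    intro x hx
    set G : Fin N → Fin N → 𝕜 := fun k l => ∑ j, (starRingEnd 𝕜) (A j k) * A j l with hG
    -- Step A : expand the quadratic form
    have hA : (∑ j, ‖A.mulVec x j‖ ^ 2)
        = RCLike.re (∑ k, ∑ l, (starRingEnd 𝕜) (x k) * x l * G k l) := by
      have h1 : ∀ j, (‖A.mulVec x j‖:ℝ) ^ 2
          = RCLike.re ((starRingEnd 𝕜) (A.mulVec x j) * A.mulVec x j) := by
        intro j
        rw [RCLike.conj_mul, ← RCLike.ofReal_pow, RCLike.ofReal_re]
      have h2 : (∑ j, (starRingEnd 𝕜) (A.mulVec x j) * A.mulVec x j)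
          = ∑ k, ∑ l, (starRingEnd 𝕜) (x k) * x l * G k l := by
        have hj : ∀ j, (starRingEnd 𝕜) (A.mulVec x j) * A.mulVec x j
            = ∑ k, ∑ l, (starRingEnd 𝕜) (x k) * x l * ((starRingEnd 𝕜) (A j k) * A j l) := by
          intro j
          simp only [Matrix.mulVec, dotProduct, map_sum, map_mul, Finset.sum_mul_sum]
          exact Finset.sum_congr rfl fun k _ => Finset.sum_congr rfl fun l _ => by ring
        rw [Finset.sum_congr rfl fun j _ => hj j, Finset.sum_comm]
        refine Finset.sum_congr rfl fun k _ => ?_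
        rw [Finset.sum_comm]
        refine Finset.sum_congr rfl fun l _ => ?_
        rw [hG, Finset.mul_sum]
      rw [← h2, map_sum]
      exact Finset.sum_congr rfl fun j _ => h1 j
    -- split diagonal and off-diagonal
    have hsplit : (∑ k, ∑ l, (starRingEnd 𝕜) (x k) * x l * G k l)
        = (∑ k, (starRingEnd 𝕜) (x k) * x k * G k k)
          + ∑ k, ∑ l ∈ Finset.univ.erase k, (starRingEnd 𝕜) (x k) * x l * G k l := by
      rw [← Finset.sum_add_distrib]
      refine Finset.sum_congr rfl fun k _ => ?_
      exact (Finset.add_sum_erase _ _ (Finset.mem_univ k)).symm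
    -- diagonal value
    have hdiag : RCLike.re (∑ k, (starRingEnd 𝕜) (x k) * x k * G k k)
        = ∑ k, ‖x k‖ ^ 2 := by
      rw [map_sum]
      refine Finset.sum_congr rfl fun k _ => ?_
      rw [RCLike.conj_mul, ← RCLike.ofReal_pow, RCLike.re_ofReal_mul]
      have : RCLike.re (G k k) = 1 := by
        rw [hG]
        simp only [map_sum]
        have hterm : ∀ j, RCLike.re ((starRingEnd 𝕜) (A j k) * A j k) = ‖A j k‖ ^ 2 :=
          fun j => by rw [RCLike.conj_mul, ← RCLike.ofReal_pow, RCLike.ofReal_re]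
        rw [Finset.sum_congr rfl fun j _ => hterm j]
        exact hcol k
      rw [this, mul_one]
    -- off-diagonal bound
    set S : Finset (Fin N) := Finset.univ.filter (fun k => x k ≠ 0) with hS
    have hScard : (S.card : ℝ) ≤ s := by
      have : {k | x k ≠ 0} = (S : Set (Fin N)) := by
        ext k; simp [hS]
      rw [this, Set.ncard_coe_finset] at hx
      exact_mod_cast hx
    have hQ : (∑ k, ‖x k‖ ^ 2) = ∑ k ∈ S, ‖x k‖ ^ 2 := by
      refine (Finset.sum_subset (Finset.subset_univ S) ?_).symm
      intro k _ hk
      simp only [hS, Finset.mem_filter, Finset.mem_univ, true_and, not_not] at hk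
      simp [hk]
    have hOff : ‖∑ k, ∑ l ∈ Finset.univ.erase k, (starRingEnd 𝕜) (x k) * x l * G k l‖
        ≤ μ * (((s:ℝ) - 1) * ∑ k, ‖x k‖ ^ 2) := by
      calc ‖∑ k, ∑ l ∈ Finset.univ.erase k, (starRingEnd 𝕜) (x k) * x l * G k l‖
          ≤ ∑ k, ∑ l ∈ Finset.univ.erase k, ‖(starRingEnd 𝕜) (x k) * x l * G k l‖ := by
            refine (norm_sum_le _ _).trans (Finset.sum_le_sum fun k _ => norm_sum_le _ _)
        _ ≤ ∑ k, ∑ l ∈ Finset.univ.erase k, ‖x k‖ * ‖x l‖ * μ := by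
            refine Finset.sum_le_sum fun k _ => Finset.sum_le_sum fun l hl => ?_
            have hne : k ≠ l := (Finset.ne_of_mem_erase hl).symm
            rw [norm_mul, norm_mul, RCLike.norm_conj]
            exact mul_le_mul_of_nonneg_left (hμ k l hne) (by positivity)
        _ = μ * ∑ k, ‖x k‖ * ∑ l ∈ Finset.univ.erase k, ‖x l‖ := by
            rw [Finset.mul_sum]
            refine Finset.sum_congr rfl fun k _ => ?_
            rw [Finset.mul_sum, Finset.mul_sum]
            exact Finset.sum_congr rfl fun l _ => by ring
        _ ≤ μ * (((s:ℝ) - 1) * ∑ k, ‖x k‖ ^ 2) := by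
            refine mul_le_mul_of_nonneg_left ?_ hμ0
            have key : (∑ k, ‖x k‖ * ∑ l ∈ Finset.univ.erase k, ‖x l‖)
                = (∑ k ∈ S, ‖x k‖)^2 - ∑ k ∈ S, ‖x k‖^2 := by
              have h1 : (∑ k, ‖x k‖ * ∑ l ∈ Finset.univ.erase k, ‖x l‖)
                  = ∑ k ∈ S, ‖x k‖ * ∑ l ∈ S.erase k, ‖x l‖ := by
                rw [← Finset.sum_subset (Finset.subset_univ S) (fun k _ hk => by
                  simp only [hS, Finset.mem_filter, Finset.mem_univ, true_and, not_not] at hk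
                  simp [hk])]
                refine Finset.sum_congr rfl fun k hk => ?_
                congr 1
                refine (Finset.sum_subset (Finset.erase_subset_erase _ (Finset.subset_univ S))
                  (fun l hl hl2 => ?_)).symm
                have : l ∉ S := fun h => hl2 (Finset.mem_erase.mpr ⟨(Finset.mem_erase.mp hl).1, h⟩)
                simp only [hS, Finset.mem_filter, Finset.mem_univ, true_and, not_not] at this
                simp [this]
              rw [h1]
              have h2 : ∀ k ∈ S, ‖x k‖ * ∑ l ∈ S.erase k, ‖x l‖
                  = ‖x k‖ * (∑ l ∈ S, ‖x l‖) - ‖x k‖^2 := by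
                intro k hk
                rw [← Finset.add_sum_erase _ _ hk]
                ring
              rw [Finset.sum_congr rfl h2, Finset.sum_sub_distrib, ← Finset.sum_mul, sq]
            rw [key, hQ]
            have hcs : (∑ k ∈ S, ‖x k‖)^2 ≤ (S.card : ℝ) * ∑ k ∈ S, ‖x k‖^2 :=
              sq_sum_le_card_mul_sum_sq (s := S) (f := fun k => ‖x k‖)
            have hQS : (0:ℝ) ≤ ∑ k ∈ S, ‖x k‖^2 := Finset.sum_nonneg fun k _ => by positivity
            nlinarith [mul_le_mul_of_nonneg_right hScard hQS]
    -- combine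
    rw [hA, hsplit, map_add, hdiag]
    calc |∑ k, ‖x k‖ ^ 2 + RCLike.re (∑ k, ∑ l ∈ Finset.univ.erase k,
            (starRingEnd 𝕜) (x k) * x l * G k l) - ∑ k, ‖x k‖ ^ 2|
        = |RCLike.re (∑ k, ∑ l ∈ Finset.univ.erase k, (starRingEnd 𝕜) (x k) * x l * G k l)| := by
          ring_nf
      _ ≤ ‖∑ k, ∑ l ∈ Finset.univ.erase k, (starRingEnd 𝕜) (x k) * x l * G k l‖ :=
          RCLike.abs_re_le_norm _
      _ ≤ μ * (((s:ℝ) - 1) * ∑ k, ‖x k‖ ^ 2) := hOff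
      _ = ((s:ℝ) - 1) * μ * ∑ k, ‖x k‖ ^ 2 := by ring
  constructor
  · intro x hx
    have h := abs_le.mp (main x hx)
    constructor <;> nlinarith [h.1, h.2]
  · intro C c δstar hC hδ hc hμc hm x hx
    have h := abs_le.mp (main x hx)
    have hQ := Qnn x
    have hbound : ((s:ℝ) - 1) * μ ≤ δstar := by
      rcases Nat.eq_zero_or_pos s with hs | hs
      · subst hs; simpa using le_trans (by linarith) hδ.le
      · have hm0 : (0:ℝ) < m := by
          have : (0:ℝ) < C * s ^ 2 := by positivity
          linarith
        have hsqm : (0:ℝ) < Real.sqrt m := Real.sqrt_pos.mpr hm0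
        have hsC : Real.sqrt C * s ≤ Real.sqrt m := by
          rw [← Real.sqrt_sq (by positivity : (0:ℝ) ≤ (s:ℝ)), ← Real.sqrt_mul hC.le]
          exact Real.sqrt_le_sqrt (by linarith)
        have h1 : ((s:ℝ) - 1) * μ ≤ (s:ℝ) * μ := by nlinarith
        have h2 : (s:ℝ) * μ ≤ (s:ℝ) * (c / Real.sqrt m) := by
          exact mul_le_mul_of_nonneg_left hμc (by positivity)
        have h3 : (s:ℝ) * (c / Real.sqrt m) ≤ δstar := by
          have heq : (s:ℝ) * (c / Real.sqrt m) = ((s:ℝ) * c) / Real.sqrt m := by ring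
          rw [heq, div_le_iff₀ hsqm, hc]
          nlinarith [Real.sqrt_nonneg C, hδ.le, hsC]
        linarith
    have hδμ : ((s:ℝ) - 1) * μ * ∑ k, ‖x k‖ ^ 2 ≤ δstar * ∑ k, ‖x k‖ ^ 2 :=
      mul_le_mul_of_nonneg_right hbound hQ
    constructor <;> nlinarith [h.1, h.2]
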